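/- Let Ψ be an even Young function with Ψ|_{ℝ≥0} strictly increasing, let f(t) = Vol_{n-1}({y ∈ ℝ^{n-1} : Ψ(t) + Σ Ψ(yᵢ) ≤ 1}) be the parallel section function of the Orlicz ball B_Ψⁿ. Then log f ∘ Ψ⁻¹ is concave on the interval [0,1] (where Ψ⁻¹ is the inverse of Ψ on ℝ≥0), i.e., for s₁,s₂ ∈ [0,1] and θ ∈ (0,1), f(Ψ⁻¹(s₁))^{1-θ} f(Ψ⁻¹(s₂))^θ ≤ f(Ψ⁻¹((1-θ)s₁ + θs₂)). -/

import Mathlib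

open MeasureTheory Real Set

noncomputable def orliczSect (Ψ : ℝ → ℝ) (d : ℕ) (c : ℝ) : ENNReal :=
  volume {y : Fin d → ℝ | ∑ i, Ψ (y i) ≤ c}

section Aux

variable {Ψ : ℝ → ℝ}
  (heven : ∀ x, Ψ (-x) = Ψ x)
  (hconv : ConvexOn ℝ Set.univ Ψ)
  (hnonneg : ∀ x, 0 ≤ Ψ x)
  (hzero : ∀ x, Ψ x = 0 ↔ x = 0)
  (hmono : StrictMonoOn Ψ (Set.Ici 0))
  {invΨ : ℝ → ℝ}
  (hinv : ∀ s : ℝ, 0 ≤ s → 0 ≤ invΨ s ∧ Ψ (invΨ s) = s)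

include hzero in
lemma psi_zero : Ψ 0 = 0 := (hzero 0).mpr rfl

include hconv in
lemma psi_meas : Measurable Ψ := by
  have : ContinuousOn Ψ (Set.univ : Set ℝ) := ConvexOn.continuousOn isOpen_univ hconv
  rw [continuousOn_univ] at this
  exact this.measurable

include heven in
lemma psi_abs (x : ℝ) : Ψ x = Ψ |x| := by
  rcases abs_choice x with h | h
  · rw [h]
  · rw [h, heven]

include heven hmono in
lemma psi_mono_abs {u v : ℝ} (h : |u| ≤ |v|) : Ψ u ≤ Ψ v := by
  rw [psi_abs heven u, psi_abs heven v]
  rcases eq_or_lt_of_le h with h' | h'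
  · rw [h']
  · exact (hmono (abs_nonneg u) (abs_nonneg v) h').le

include heven hmono in
lemma psi_le_reflect {x r : ℝ} (hr : 0 ≤ r) (h : Ψ x ≤ Ψ r) : |x| ≤ r := by
  by_contra hc
  push_neg at hc
  have : Ψ r < Ψ x := by
    rw [psi_abs heven x]
    have := hmono hr (le_trans hr hc.le) hc
    simpa using this
  linarith

lemma orliczSect_mono (d : ℕ) : Monotone (orliczSect Ψ d) := by
  intro c c' h
  exact measure_mono fun y hy => le_trans hy h

include hnonneg in
lemma orliczSect_of_neg {d : ℕ} {c : ℝ} (hc : c < 0) : orliczSect Ψ d c = 0 := by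
  have : {y : Fin d → ℝ | ∑ i, Ψ (y i) ≤ c} = ∅ := by
    ext y
    simp only [Set.mem_setOf_eq, Set.mem_empty_iff_false, iff_false, not_le]
    exact lt_of_lt_of_le hc (Finset.sum_nonneg fun i _ => hnonneg _)
  rw [orliczSect, this, measure_empty]

include heven hnonneg hmono hinv in
lemma orliczSect_ne_top (d : ℕ) (c : ℝ) : orliczSect Ψ d c ≠ ⊤ := by
  rcases lt_or_ge c 0 with hc | hc
  · rw [orliczSect_of_neg hnonneg hc]; exact ENNReal.zero_ne_top
  · obtain ⟨hι, hΨι⟩ := hinv c hc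
    have hsub : {y : Fin d → ℝ | ∑ i, Ψ (y i) ≤ c} ⊆
        Set.pi Set.univ (fun _ : Fin d => Icc (-(invΨ c)) (invΨ c)) := by
      intro y hy
      intro i _
      have h1 : Ψ (y i) ≤ ∑ j, Ψ (y j) :=
        Finset.single_le_sum (fun j _ => hnonneg (y j)) (Finset.mem_univ i)
      have h2 : Ψ (y i) ≤ Ψ (invΨ c) := by rw [hΨι]; exact le_trans h1 hy
      have := psi_le_reflect heven hmono hι h2
      exact ⟨neg_le_of_abs_le this, le_of_abs_le this⟩
    refine ne_top_of_le_ne_top ?_ (measure_mono hsub)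
    rw [volume_pi_pi]
    exact (ENNReal.prod_lt_top fun _ _ => by simp [Real.volume_Icc]).ne

include hconv in
lemma orliczSect_measSet (d : ℕ) (c : ℝ) :
    MeasurableSet {y : Fin d → ℝ | ∑ i, Ψ (y i) ≤ c} := by
  have hm : Measurable fun y : Fin d → ℝ => ∑ i, Ψ (y i) :=
    Finset.measurable_sum _ fun i _ => (psi_meas hconv).comp (measurable_pi_apply i)
  exact measurableSet_le hm measurable_const

include hconv in
lemma orliczSect_succ (d : ℕ) (c : ℝ) :
    orliczSect Ψ (d + 1) c = ∫⁻ t : ℝ, orliczSect Ψ d (c - Ψ t) := by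
  have hΨm := psi_meas hconv
  set e := MeasurableEquiv.piFinSuccAbove (fun _ : Fin (d + 1) => ℝ) 0 with he
  have hmp : MeasurePreserving e volume volume :=
    volume_preserving_piFinSuccAbove (fun _ : Fin (d + 1) => ℝ) 0
  set S : Set (ℝ × (Fin d → ℝ)) := {p | Ψ p.1 + ∑ j, Ψ (p.2 j) ≤ c} with hS
  have hSm : MeasurableSet S := by
    have hm : Measurable fun p : ℝ × (Fin d → ℝ) => Ψ p.1 + ∑ j, Ψ (p.2 j) := by
      exact (hΨm.comp measurable_fst).add
        (Finset.measurable_sum _ fun j _ =>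
          hΨm.comp ((measurable_pi_apply j).comp measurable_snd))
    exact measurableSet_le hm measurable_const
  have hpre : {y : Fin (d + 1) → ℝ | ∑ i, Ψ (y i) ≤ c} = e ⁻¹' S := by
    ext y
    simp only [Set.mem_setOf_eq, Set.mem_preimage, hS]
    constructor
    · intro h
      show Ψ (y 0) + ∑ j, Ψ (y (Fin.succAbove 0 j)) ≤ c
      rw [← Fin.sum_univ_succAbove (fun i => Ψ (y i)) 0]; exact h
    · intro h
      rw [Fin.sum_univ_succAbove (fun i => Ψ (y i)) 0]; exact h
  rw [orliczSect, hpre, hmp.measure_preimage hSm.nullMeasurableSet]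
  have : (volume : Measure (ℝ × (Fin d → ℝ))) S = ∫⁻ t : ℝ, volume (Prod.mk t ⁻¹' S) :=
    Measure.prod_apply hSm
  rw [this]
  refine lintegral_congr fun t => ?_
  congr 1
  ext z
  simp only [Set.mem_preimage, Set.mem_setOf_eq, hS, orliczSect]
  constructor
  · intro h; linarith
  · intro h; linarith

end Aux
section Aux2

variable {Ψ : ℝ → ℝ}
  (heven : ∀ x, Ψ (-x) = Ψ x)
  (hconv : ConvexOn ℝ Set.univ Ψ)
  (hnonneg : ∀ x, 0 ≤ Ψ x)
  (hzero : ∀ x, Ψ x = 0 ↔ x = 0)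
  (hmono : StrictMonoOn Ψ (Set.Ici 0))
  {invΨ : ℝ → ℝ}
  (hinv : ∀ s : ℝ, 0 ≤ s → 0 ≤ invΨ s ∧ Ψ (invΨ s) = s)

include heven hnonneg hmono hinv in
lemma orliczSect_toReal_mono (d : ℕ) : Monotone (fun x => (orliczSect Ψ d x).toReal) :=
  fun x y h => ENNReal.toReal_mono (orliczSect_ne_top heven hnonneg hmono hinv d y)
    (orliczSect_mono d h)

include hnonneg in
lemma nonneg_of_orliczSect_pos {d : ℕ} {x : ℝ} (h : 0 < (orliczSect Ψ d x).toReal) : 0 ≤ x := by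
  by_contra hc
  push_neg at hc
  rw [orliczSect_of_neg hnonneg hc] at h
  simp at h

include heven hconv hnonneg hzero hmono hinv in
lemma radius_lemma (d : ℕ) (c t : ℝ) (ht : 0 < t)
    (h0 : t ≤ (orliczSect Ψ d c).toReal) :
    0 ∈ {u : ℝ | t ≤ (orliczSect Ψ d (c - Ψ u)).toReal} ∧
    BddAbove {u : ℝ | t ≤ (orliczSect Ψ d (c - Ψ u)).toReal} ∧
    0 ≤ sSup {u : ℝ | t ≤ (orliczSect Ψ d (c - Ψ u)).toReal} ∧
    volume {u : ℝ | t ≤ (orliczSect Ψ d (c - Ψ u)).toReal} =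
      ENNReal.ofReal (2 * sSup {u : ℝ | t ≤ (orliczSect Ψ d (c - Ψ u)).toReal}) := by
  set S := {u : ℝ | t ≤ (orliczSect Ψ d (c - Ψ u)).toReal} with hSdef
  have hΨ0 : Ψ 0 = 0 := psi_zero hzero
  have h0mem : (0 : ℝ) ∈ S := by
    show t ≤ (orliczSect Ψ d (c - Ψ 0)).toReal
    rw [hΨ0, sub_zero]; exact h0
  -- every element of S has |u| ≤ invΨ c
  have hc0 : 0 ≤ c := by
    have : 0 < (orliczSect Ψ d (c - Ψ 0)).toReal := lt_of_lt_of_le ht h0mem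
    have := nonneg_of_orliczSect_pos hnonneg this
    rw [hΨ0, sub_zero] at this; exact this
  obtain ⟨hι, hΨι⟩ := hinv c hc0
  have hbound : ∀ u ∈ S, |u| ≤ invΨ c := by
    intro u hu
    have h1 : 0 < (orliczSect Ψ d (c - Ψ u)).toReal := lt_of_lt_of_le ht hu
    have h2 : 0 ≤ c - Ψ u := nonneg_of_orliczSect_pos hnonneg h1
    have h3 : Ψ u ≤ Ψ (invΨ c) := by rw [hΨι]; linarith
    exact psi_le_reflect heven hmono hι h3
  have hbdd : BddAbove S := ⟨invΨ c, fun u hu => le_of_abs_le (hbound u hu)⟩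
  have hSne : S.Nonempty := ⟨0, h0mem⟩
  have hr0 : 0 ≤ sSup S := le_csSup hbdd h0mem
  -- downward closedness in |·|
  have hdown : ∀ u ∈ S, ∀ w : ℝ, |w| ≤ |u| → w ∈ S := by
    intro u hu w hw
    have h1 : Ψ w ≤ Ψ u := psi_mono_abs heven hmono hw
    have h2 : c - Ψ u ≤ c - Ψ w := by linarith
    exact le_trans hu (orliczSect_toReal_mono heven hnonneg hmono hinv d h2)
  -- S ⊆ Icc (-r) r
  have hsub : S ⊆ Icc (-(sSup S)) (sSup S) := by
    intro u hu
    have h1 : u ≤ sSup S := le_csSup hbdd hu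
    have h2 : -u ∈ S := by
      apply hdown u hu
      rw [abs_neg]
    have h3 : -u ≤ sSup S := le_csSup hbdd h2
    exact ⟨by linarith, h1⟩
  have hsup : Ioo (-(sSup S)) (sSup S) ⊆ S := by
    intro u hu
    have habs : |u| < sSup S := abs_lt.mpr ⟨hu.1, hu.2⟩
    obtain ⟨v, hv, hlt⟩ := exists_lt_of_lt_csSup hSne habs
    apply hdown v hv
    rw [abs_of_nonneg (le_trans (abs_nonneg u) hlt.le)]
    exact hlt.le
  refine ⟨h0mem, hbdd, hr0, le_antisymm ?_ ?_⟩
  · calc volume S ≤ volume (Icc (-(sSup S)) (sSup S)) := measure_mono hsub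
      _ = ENNReal.ofReal (2 * sSup S) := by rw [Real.volume_Icc]; ring_nf
  · calc ENNReal.ofReal (2 * sSup S) = volume (Ioo (-(sSup S)) (sSup S)) := by
          rw [Real.volume_Ioo]; ring_nf
      _ ≤ volume S := measure_mono hsup

end Aux2

-- two-point weighted AM-GM in ℝ≥0∞
lemma ennreal_geom_mean {θ : ℝ} (hθ0 : 0 < θ) (hθ1 : θ < 1) (X Y : ENNReal) :
    X ^ (1 - θ) * Y ^ θ ≤ ENNReal.ofReal (1 - θ) * X + ENNReal.ofReal θ * Y := by
  rcases eq_or_ne X ⊤ with hX | hX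
  · have : ENNReal.ofReal (1 - θ) * X = ⊤ := by
      rw [hX]
      exact ENNReal.mul_top (by simp [ENNReal.ofReal_eq_zero]; linarith)
    rw [this]; simp
  rcases eq_or_ne Y ⊤ with hY | hY
  · have : ENNReal.ofReal θ * Y = ⊤ := by
      rw [hY]
      exact ENNReal.mul_top (by simp [ENNReal.ofReal_eq_zero]; linarith)
    rw [this]; simp
  lift X to NNReal using hX
  lift Y to NNReal using hY
  have key := NNReal.geom_mean_le_arith_mean2_weighted
    (Real.toNNReal (1 - θ)) (Real.toNNReal θ) X Y (by
      rw [← Real.toNNReal_add (by linarith) hθ0.le]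
      norm_num)
  have h1 : ((Real.toNNReal (1 - θ) : NNReal) : ℝ) = 1 - θ := Real.coe_toNNReal _ (by linarith)
  have h2 : ((Real.toNNReal θ : NNReal) : ℝ) = θ := Real.coe_toNNReal _ hθ0.le
  rw [h1, h2] at key
  calc (X : ENNReal) ^ (1 - θ) * (Y : ENNReal) ^ θ
      = ((X ^ (1 - θ) * Y ^ θ : NNReal) : ENNReal) := by
        rw [ENNReal.coe_mul, ENNReal.coe_rpow_of_nonneg _ (by linarith : (0:ℝ) ≤ 1 - θ),
          ENNReal.coe_rpow_of_nonneg _ hθ0.le]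
    _ ≤ ((Real.toNNReal (1 - θ) * X + Real.toNNReal θ * Y : NNReal) : ENNReal) :=
        ENNReal.coe_le_coe.mpr key
    _ = ENNReal.ofReal (1 - θ) * X + ENNReal.ofReal θ * Y := by
        rw [ENNReal.coe_add, ENNReal.coe_mul, ENNReal.coe_mul]
        rfl
section Main

variable {Ψ : ℝ → ℝ}
  (heven : ∀ x, Ψ (-x) = Ψ x)
  (hconv : ConvexOn ℝ Set.univ Ψ)
  (hnonneg : ∀ x, 0 ≤ Ψ x)
  (hzero : ∀ x, Ψ x = 0 ↔ x = 0)
  (hmono : StrictMonoOn Ψ (Set.Ici 0))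
  {invΨ : ℝ → ℝ}
  (hinv : ∀ s : ℝ, 0 ≤ s → 0 ≤ invΨ s ∧ Ψ (invΨ s) = s)

include heven hconv hnonneg hzero hmono hinv in
lemma orliczSect_logConcave (d : ℕ) :
    ∀ θ : ℝ, θ ∈ Set.Ioo (0:ℝ) 1 → ∀ a b : ℝ,
      orliczSect Ψ d a ^ (1 - θ) * orliczSect Ψ d b ^ θ ≤
        orliczSect Ψ d ((1 - θ) * a + θ * b) := by
  induction d with
  | zero =>
    intro θ hθ a b
    obtain ⟨hθ0, hθ1⟩ := hθ
    have hw1 : (0:ℝ) < 1 - θ := by linarith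
    rcases lt_or_ge a 0 with ha | ha
    · rw [orliczSect_of_neg hnonneg ha, ENNReal.zero_rpow_of_pos hw1, zero_mul]
      exact zero_le
    rcases lt_or_ge b 0 with hb | hb
    · rw [orliczSect_of_neg hnonneg hb, ENNReal.zero_rpow_of_pos hθ0, mul_zero]
      exact zero_le
    have hval : ∀ c : ℝ, 0 ≤ c → orliczSect Ψ 0 c = 1 := by
      intro c hc
      have hset : {y : Fin 0 → ℝ | ∑ i, Ψ (y i) ≤ c} = Set.univ := by
        ext y; simp [hc]
      rw [orliczSect, hset, ← Set.pi_univ, volume_pi_pi]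
      simp
    rw [hval a ha, hval b hb, hval _ (by nlinarith)]
    simp
  | succ d IH =>
    intro θ hθ a b
    obtain ⟨hθ0, hθ1⟩ := hθ
    have hw1 : (0:ℝ) < 1 - θ := by linarith
    rcases lt_or_ge a 0 with ha | ha
    · rw [orliczSect_of_neg hnonneg ha, ENNReal.zero_rpow_of_pos hw1, zero_mul]
      exact zero_le
    rcases lt_or_ge b 0 with hb | hb
    · rw [orliczSect_of_neg hnonneg hb, ENNReal.zero_rpow_of_pos hθ0, mul_zero]
      exact zero_le
    set m := (1 - θ) * a + θ * b with hm
    have hdeg : ∀ c : ℝ, orliczSect Ψ d c = 0 → orliczSect Ψ (d+1) c = 0 := by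
      intro c hc
      rw [orliczSect_succ hconv]
      have hz : ∀ t : ℝ, orliczSect Ψ d (c - Ψ t) = 0 := by
        intro t
        refine le_antisymm ?_ (zero_le)
        rw [← hc]
        exact orliczSect_mono d (by have := hnonneg t; linarith)
      simp [hz]
    rcases eq_or_ne (orliczSect Ψ d a) 0 with hA0 | hA0
    · rw [hdeg a hA0, ENNReal.zero_rpow_of_pos hw1, zero_mul]; exact zero_le
    rcases eq_or_ne (orliczSect Ψ d b) 0 with hB0 | hB0
    · rw [hdeg b hB0, ENNReal.zero_rpow_of_pos hθ0, mul_zero]; exact zero_le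
    set α := (orliczSect Ψ d a).toReal with hα
    set β := (orliczSect Ψ d b).toReal with hβ
    have hαpos : 0 < α :=
      ENNReal.toReal_pos hA0 (orliczSect_ne_top heven hnonneg hmono hinv d a)
    have hβpos : 0 < β :=
      ENNReal.toReal_pos hB0 (orliczSect_ne_top heven hnonneg hmono hinv d b)
    set γ := α ^ (1 - θ) * β ^ θ with hγ
    have hγpos : 0 < γ := by positivity
    have hRmono := orliczSect_toReal_mono heven hnonneg hmono hinv (Ψ := Ψ) d
    have hRmeas : Measurable (fun x : ℝ => (orliczSect Ψ d x).toReal) := hRmono.measurable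
    have hΨm : Measurable Ψ := psi_meas hconv
    -- pointwise PL inequality (real level)
    have hkey : ∀ u v : ℝ,
        (orliczSect Ψ d (a - Ψ u)).toReal ^ (1-θ) * (orliczSect Ψ d (b - Ψ v)).toReal ^ θ ≤
          (orliczSect Ψ d (m - Ψ ((1-θ)*u + θ*v))).toReal := by
      intro u v
      have hkeyE : orliczSect Ψ d (a - Ψ u) ^ (1-θ) * orliczSect Ψ d (b - Ψ v) ^ θ ≤
          orliczSect Ψ d (m - Ψ ((1-θ)*u + θ*v)) := by
        refine le_trans (IH θ ⟨hθ0, hθ1⟩ (a - Ψ u) (b - Ψ v)) (orliczSect_mono d ?_)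
        have hcvx : Ψ ((1-θ)*u + θ*v) ≤ (1-θ) * Ψ u + θ * Ψ v := by
          have := hconv.2 (Set.mem_univ u) (Set.mem_univ v) hw1.le hθ0.le (by ring)
          simpa [smul_eq_mul] using this
        rw [hm]; nlinarith [hcvx]
      have hne := orliczSect_ne_top heven hnonneg hmono hinv d (m - Ψ ((1-θ)*u + θ*v))
      calc (orliczSect Ψ d (a - Ψ u)).toReal ^ (1-θ) * (orliczSect Ψ d (b - Ψ v)).toReal ^ θ
          = ((orliczSect Ψ d (a - Ψ u)) ^ (1-θ) * (orliczSect Ψ d (b - Ψ v)) ^ θ).toReal := by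
            rw [ENNReal.toReal_mul, ENNReal.toReal_rpow, ENNReal.toReal_rpow]
        _ ≤ _ := ENNReal.toReal_mono hne hkeyE
    -- layer cake identity
    have layer : ∀ c ρ : ℝ, 0 < ρ →
        (∫⁻ s in Set.Ioi (0:ℝ),
            volume {u : ℝ | s * ρ ≤ (orliczSect Ψ d (c - Ψ u)).toReal}) =
          orliczSect Ψ (d+1) c * (ENNReal.ofReal ρ)⁻¹ := by
      intro c ρ hρ
      have hfm : Measurable fun u : ℝ => (orliczSect Ψ d (c - Ψ u)).toReal * ρ⁻¹ :=
        (hRmeas.comp (measurable_const.sub hΨm)).mul_const _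
      have hnn : 0 ≤ᵐ[volume] fun u : ℝ => (orliczSect Ψ d (c - Ψ u)).toReal * ρ⁻¹ :=
        Filter.Eventually.of_forall fun u => mul_nonneg ENNReal.toReal_nonneg (by positivity)
      have hLC := lintegral_eq_lintegral_meas_le volume hnn hfm.aemeasurable
      have hL : (∫⁻ u : ℝ, ENNReal.ofReal ((orliczSect Ψ d (c - Ψ u)).toReal * ρ⁻¹)) =
          orliczSect Ψ (d+1) c * (ENNReal.ofReal ρ)⁻¹ := by
        have heq : ∀ u : ℝ, ENNReal.ofReal ((orliczSect Ψ d (c - Ψ u)).toReal * ρ⁻¹) =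
            orliczSect Ψ d (c - Ψ u) * (ENNReal.ofReal ρ)⁻¹ := by
          intro u
          rw [ENNReal.ofReal_mul ENNReal.toReal_nonneg,
            ENNReal.ofReal_toReal (orliczSect_ne_top heven hnonneg hmono hinv d _),
            ENNReal.ofReal_inv_of_pos hρ]
        have hsm : Measurable fun u : ℝ => orliczSect Ψ d (c - Ψ u) :=
          (orliczSect_mono d).measurable.comp (measurable_const.sub hΨm)
        simp_rw [heq]
        rw [lintegral_mul_const _ hsm, ← orliczSect_succ hconv]
      rw [hL] at hLC
      calc (∫⁻ s in Set.Ioi (0:ℝ),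
              volume {u : ℝ | s * ρ ≤ (orliczSect Ψ d (c - Ψ u)).toReal})
          = ∫⁻ t in Set.Ioi (0:ℝ),
              volume {u : ℝ | t ≤ (orliczSect Ψ d (c - Ψ u)).toReal * ρ⁻¹} := by
            refine lintegral_congr fun s => ?_
            congr 1
            ext u
            simp only [Set.mem_setOf_eq]
            rw [← div_eq_mul_inv, le_div_iff₀ hρ]
        _ = orliczSect Ψ (d+1) c * (ENNReal.ofReal ρ)⁻¹ := hLC.symm
    -- pointwise superlevel comparison
    have hpoint : ∀ s : ℝ,
        ENNReal.ofReal (1-θ) * volume {u : ℝ | s * α ≤ (orliczSect Ψ d (a - Ψ u)).toReal} +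
          ENNReal.ofReal θ * volume {u : ℝ | s * β ≤ (orliczSect Ψ d (b - Ψ u)).toReal} ≤
          volume {u : ℝ | s * γ ≤ (orliczSect Ψ d (m - Ψ u)).toReal} := by
      intro s
      rcases le_or_gt s 0 with hs | hs
      · have hH : {u : ℝ | s * γ ≤ (orliczSect Ψ d (m - Ψ u)).toReal} = Set.univ := by
          refine Set.eq_univ_of_forall fun u => ?_
          show s * γ ≤ _
          have : s * γ ≤ 0 := mul_nonpos_of_nonpos_of_nonneg hs hγpos.le
          exact le_trans this ENNReal.toReal_nonneg
        rw [hH, Real.volume_univ]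
        exact le_top
      rcases le_or_gt s 1 with hs1 | hs1
      · -- main case
        have hsα : 0 < s * α := by positivity
        have hsβ : 0 < s * β := by positivity
        have hsγ : 0 < s * γ := by positivity
        have hFc : s * α ≤ (orliczSect Ψ d a).toReal := by
          rw [← hα]; nlinarith
        have hGc : s * β ≤ (orliczSect Ψ d b).toReal := by
          rw [← hβ]; nlinarith
        have hHc : s * γ ≤ (orliczSect Ψ d m).toReal := by
          have h00 := hkey 0 0
          rw [psi_zero hzero, sub_zero, sub_zero, ← hα, ← hβ] at h00
          have : (1-θ)*(0:ℝ) + θ*0 = 0 := by ring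
          rw [this, psi_zero hzero, sub_zero] at h00
          calc s * γ ≤ γ := by nlinarith
            _ = α ^ (1-θ) * β ^ θ := hγ
            _ ≤ _ := h00
        obtain ⟨hF0, hFbdd, hFr0, hFvol⟩ :=
          radius_lemma heven hconv hnonneg hzero hmono hinv d a (s*α) hsα hFc
        obtain ⟨hG0, hGbdd, hGr0, hGvol⟩ :=
          radius_lemma heven hconv hnonneg hzero hmono hinv d b (s*β) hsβ hGc
        obtain ⟨hH0, hHbdd, hHr0, hHvol⟩ :=
          radius_lemma heven hconv hnonneg hzero hmono hinv d m (s*γ) hsγ hHc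
        set SF := {u : ℝ | s * α ≤ (orliczSect Ψ d (a - Ψ u)).toReal}
        set SG := {u : ℝ | s * β ≤ (orliczSect Ψ d (b - Ψ u)).toReal}
        set SH := {u : ℝ | s * γ ≤ (orliczSect Ψ d (m - Ψ u)).toReal}
        have hcomb : ∀ u ∈ SF, ∀ v ∈ SG, (1-θ)*u + θ*v ∈ SH := by
          intro u hu v hv
          show s * γ ≤ _
          refine le_trans ?_ (hkey u v)
          have hFu : s * α ≤ (orliczSect Ψ d (a - Ψ u)).toReal := hu
          have hGv : s * β ≤ (orliczSect Ψ d (b - Ψ v)).toReal := hv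
          have hstep : s * γ = (s*α)^(1-θ) * (s*β)^θ := by
            rw [Real.mul_rpow hs.le hαpos.le, Real.mul_rpow hs.le hβpos.le, hγ]
            have hss : s ^ (1-θ) * s ^ θ = s := by
              rw [← Real.rpow_add hs]; norm_num
            calc s * (α ^ (1-θ) * β ^ θ) = (s ^ (1-θ) * s ^ θ) * (α ^ (1-θ) * β ^ θ) := by
                  rw [hss]
              _ = s ^ (1-θ) * α ^ (1-θ) * (s ^ θ * β ^ θ) := by ring
          rw [hstep]
          have h1 : (s*α)^(1-θ) ≤ (orliczSect Ψ d (a - Ψ u)).toReal ^ (1-θ) :=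
            Real.rpow_le_rpow hsα.le hFu hw1.le
          have h2 : (s*β)^θ ≤ (orliczSect Ψ d (b - Ψ v)).toReal ^ θ :=
            Real.rpow_le_rpow hsβ.le hGv hθ0.le
          exact mul_le_mul h1 h2 (Real.rpow_nonneg hsβ.le _) (Real.rpow_nonneg ENNReal.toReal_nonneg _)
        have hrH : (1-θ) * sSup SF + θ * sSup SG ≤ sSup SH := by
          have step1 : ∀ v ∈ SG, (1-θ) * sSup SF + θ * v ≤ sSup SH := by
            intro v hv
            have h1 : ∀ u ∈ SF, u ≤ (sSup SH - θ*v) / (1-θ) := by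
              intro u hu
              have h2 := le_csSup hHbdd (hcomb u hu v hv)
              rw [le_div_iff₀ hw1]
              linarith
            have h3 := csSup_le ⟨0, hF0⟩ h1
            rw [le_div_iff₀ hw1] at h3
            linarith
          have h4 : ∀ v ∈ SG, v ≤ (sSup SH - (1-θ) * sSup SF) / θ := by
            intro v hv
            rw [le_div_iff₀ hθ0]
            have := step1 v hv
            linarith
          have h5 := csSup_le ⟨0, hG0⟩ h4
          rw [le_div_iff₀ hθ0] at h5
          linarith
        rw [hFvol, hGvol, hHvol]
        calc ENNReal.ofReal (1-θ) * ENNReal.ofReal (2 * sSup SF) +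
              ENNReal.ofReal θ * ENNReal.ofReal (2 * sSup SG)
            = ENNReal.ofReal ((1-θ) * (2 * sSup SF) + θ * (2 * sSup SG)) := by
              rw [← ENNReal.ofReal_mul hw1.le, ← ENNReal.ofReal_mul hθ0.le,
                ← ENNReal.ofReal_add (by positivity) (by positivity)]
          _ ≤ ENNReal.ofReal (2 * sSup SH) := ENNReal.ofReal_le_ofReal (by linarith)
      · -- s > 1 : superlevel sets for F and G are empty
        have hFe : {u : ℝ | s * α ≤ (orliczSect Ψ d (a - Ψ u)).toReal} = ∅ := by
          ext u
          simp only [Set.mem_setOf_eq, Set.mem_empty_iff_false, iff_false, not_le]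
          have h1 : (orliczSect Ψ d (a - Ψ u)).toReal ≤ α := by
            rw [hα]
            exact hRmono (by have := hnonneg u; linarith)
          nlinarith
        have hGe : {u : ℝ | s * β ≤ (orliczSect Ψ d (b - Ψ u)).toReal} = ∅ := by
          ext u
          simp only [Set.mem_setOf_eq, Set.mem_empty_iff_false, iff_false, not_le]
          have h1 : (orliczSect Ψ d (b - Ψ u)).toReal ≤ β := by
            rw [hβ]
            exact hRmono (by have := hnonneg u; linarith)
          nlinarith
        rw [hFe, hGe, measure_empty, mul_zero, mul_zero, add_zero]
        exact zero_le
    -- integrate the pointwise inequality over s ∈ Ioi 0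
    have hFant : Antitone fun s : ℝ =>
        volume {u : ℝ | s * α ≤ (orliczSect Ψ d (a - Ψ u)).toReal} := by
      intro s s' h
      exact measure_mono fun u hu =>
        le_trans (mul_le_mul_of_nonneg_right h hαpos.le) hu
    have hGant : Antitone fun s : ℝ =>
        volume {u : ℝ | s * β ≤ (orliczSect Ψ d (b - Ψ u)).toReal} := by
      intro s s' h
      exact measure_mono fun u hu =>
        le_trans (mul_le_mul_of_nonneg_right h hβpos.le) hu
    have hmain : (∫⁻ s in Set.Ioi (0:ℝ),
          (ENNReal.ofReal (1-θ) * volume {u : ℝ | s * α ≤ (orliczSect Ψ d (a - Ψ u)).toReal} +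
           ENNReal.ofReal θ * volume {u : ℝ | s * β ≤ (orliczSect Ψ d (b - Ψ u)).toReal})) ≤
        ∫⁻ s in Set.Ioi (0:ℝ),
          volume {u : ℝ | s * γ ≤ (orliczSect Ψ d (m - Ψ u)).toReal} :=
      lintegral_mono fun s => hpoint s
    rw [lintegral_add_left (hFant.measurable.const_mul _),
      lintegral_const_mul _ hFant.measurable,
      lintegral_const_mul _ hGant.measurable,
      layer a α hαpos, layer b β hβpos, layer m γ hγpos] at hmain
    -- AM-GM and final algebra
    have hgm := ennreal_geom_mean hθ0 hθ1
      (orliczSect Ψ (d+1) a * (ENNReal.ofReal α)⁻¹)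
      (orliczSect Ψ (d+1) b * (ENNReal.ofReal β)⁻¹)
    have hchain := le_trans hgm hmain
    have hα'0 : (ENNReal.ofReal α) ≠ 0 := by simp [ENNReal.ofReal_eq_zero]; linarith
    have hβ'0 : (ENNReal.ofReal β) ≠ 0 := by simp [ENNReal.ofReal_eq_zero]; linarith
    have hαp0 : (ENNReal.ofReal α) ^ (1-θ) ≠ 0 := by
      simp [ENNReal.rpow_eq_zero_iff, hα'0, ENNReal.ofReal_ne_top]
    have hαpt : (ENNReal.ofReal α) ^ (1-θ) ≠ ⊤ := by
      simp [ENNReal.rpow_eq_top_iff, hα'0, ENNReal.ofReal_ne_top]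
    have hβp0 : (ENNReal.ofReal β) ^ θ ≠ 0 := by
      simp [ENNReal.rpow_eq_zero_iff, hβ'0, ENNReal.ofReal_ne_top]
    have hβpt : (ENNReal.ofReal β) ^ θ ≠ ⊤ := by
      simp [ENNReal.rpow_eq_top_iff, hβ'0, ENNReal.ofReal_ne_top]
    have hγ'eq : (ENNReal.ofReal α) ^ (1-θ) * (ENNReal.ofReal β) ^ θ = ENNReal.ofReal γ := by
      rw [hγ, ENNReal.ofReal_mul (by positivity),
        ENNReal.ofReal_rpow_of_pos hαpos, ENNReal.ofReal_rpow_of_pos hβpos]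
    have hγ'0 : (ENNReal.ofReal γ) ≠ 0 := by simp [ENNReal.ofReal_eq_zero]; linarith
    calc orliczSect Ψ (d+1) a ^ (1-θ) * orliczSect Ψ (d+1) b ^ θ
        = ((orliczSect Ψ (d+1) a * (ENNReal.ofReal α)⁻¹) ^ (1-θ) *
            (orliczSect Ψ (d+1) b * (ENNReal.ofReal β)⁻¹) ^ θ) *
            ((ENNReal.ofReal α) ^ (1-θ) * (ENNReal.ofReal β) ^ θ) := by
          rw [ENNReal.mul_rpow_of_nonneg _ _ hw1.le, ENNReal.mul_rpow_of_nonneg _ _ hθ0.le,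
            ENNReal.inv_rpow, ENNReal.inv_rpow]
          calc orliczSect Ψ (d+1) a ^ (1-θ) * orliczSect Ψ (d+1) b ^ θ
              = (orliczSect Ψ (d+1) a ^ (1-θ) * orliczSect Ψ (d+1) b ^ θ) *
                ((((ENNReal.ofReal α) ^ (1-θ))⁻¹ * (ENNReal.ofReal α) ^ (1-θ)) *
                 (((ENNReal.ofReal β) ^ θ)⁻¹ * (ENNReal.ofReal β) ^ θ)) := by
                rw [ENNReal.inv_mul_cancel hαp0 hαpt, ENNReal.inv_mul_cancel hβp0 hβpt]
                ring
            _ = _ := by ring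
      _ ≤ (orliczSect Ψ (d+1) m * (ENNReal.ofReal γ)⁻¹) *
            ((ENNReal.ofReal α) ^ (1-θ) * (ENNReal.ofReal β) ^ θ) :=
          mul_le_mul_left hchain _
      _ = orliczSect Ψ (d+1) m * ((ENNReal.ofReal γ)⁻¹ * ENNReal.ofReal γ) := by
          rw [hγ'eq]; ring
      _ = orliczSect Ψ (d+1) m := by
          rw [ENNReal.inv_mul_cancel hγ'0 ENNReal.ofReal_ne_top, mul_one]

end Main
theorem orlicz_section_function_log_concave
    (n : ℕ) (hn : 2 ≤ n) (Ψ : ℝ → ℝ)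
    (heven : ∀ x, Ψ (-x) = Ψ x)
    (hconv : ConvexOn ℝ Set.univ Ψ)
    (hnonneg : ∀ x, 0 ≤ Ψ x)
    (hzero : ∀ x, Ψ x = 0 ↔ x = 0)
    (hmono : StrictMonoOn Ψ (Set.Ici 0))
    (invΨ : ℝ → ℝ)
    (hinv : ∀ s : ℝ, 0 ≤ s → 0 ≤ invΨ s ∧ Ψ (invΨ s) = s)
    (f : ℝ → ℝ)
    (hf : ∀ t, f t =
      (volume {y : Fin (n - 1) → ℝ | Ψ t + ∑ i, Ψ (y i) ≤ 1}).toReal) :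
    ∀ s₁ s₂ θ : ℝ, s₁ ∈ Set.Icc (0 : ℝ) 1 → s₂ ∈ Set.Icc (0 : ℝ) 1 →
      θ ∈ Set.Ioo (0 : ℝ) 1 →
      f (invΨ s₁) ^ (1 - θ) * f (invΨ s₂) ^ θ ≤
        f (invΨ ((1 - θ) * s₁ + θ * s₂)) := by
  intro s₁ s₂ θ hs₁ hs₂ hθ
  have hfs : ∀ s : ℝ, 0 ≤ s → f (invΨ s) = (orliczSect Ψ (n-1) (1 - s)).toReal := by
    intro s hs
    rw [hf]
    congr 1
    show volume _ = volume _
    congr 1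
    ext y
    simp only [Set.mem_setOf_eq]
    rw [(hinv s hs).2]
    constructor <;> intro h <;> linarith
  have hm0 : 0 ≤ (1 - θ) * s₁ + θ * s₂ := by
    have := hθ.1; have := hθ.2; have := hs₁.1; have := hs₂.1
    nlinarith
  rw [hfs s₁ hs₁.1, hfs s₂ hs₂.1, hfs _ hm0]
  have key := orliczSect_logConcave heven hconv hnonneg hzero hmono hinv (n-1)
    θ hθ (1 - s₁) (1 - s₂)
  have harg : (1 - θ) * (1 - s₁) + θ * (1 - s₂) = 1 - ((1 - θ) * s₁ + θ * s₂) := by ring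
  rw [harg] at key
  have hne := orliczSect_ne_top heven hnonneg hmono hinv (Ψ := Ψ) (n-1)
    (1 - ((1 - θ) * s₁ + θ * s₂))
  calc (orliczSect Ψ (n-1) (1 - s₁)).toReal ^ (1-θ) *
        (orliczSect Ψ (n-1) (1 - s₂)).toReal ^ θ
      = (orliczSect Ψ (n-1) (1 - s₁) ^ (1-θ) *
          orliczSect Ψ (n-1) (1 - s₂) ^ θ).toReal := by
        rw [ENNReal.toReal_mul, ENNReal.toReal_rpow, ENNReal.toReal_rpow]
    _ ≤ _ := ENNReal.toReal_mono hne key
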